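/- Let H be a finite-dimensional vector space over a valued field K with valuation ring O. For every semi-lattice u in H there exist an integer l, r ≥ 0 with l + r = dim H and an O-module isomorphism u ≅ O^l × K^r; consequently there exists a K-basis b_1, …, b_n of H such that u = ⊕_{i=1}^n (u ∩ K b_i). -/

import Mathlib

section

variable (K : Type*) {O H : Type*} [Field K] [CommRing O] [IsDomain O] [ValuationRing O]
  [Algebra O K] [IsFractionRing O K]
  [AddCommGroup H] [Module K H] [Module O H] [IsScalarTower O K H]

/-- An `O`-submodule `u` of the `K`-vector space `H` is a *semi-lattice* if there is a
`K`-subspace `U ≤ H` contained in `u` such that `u/U` is a lattice in `H/U`, i.e. `u`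
is generated over `U` by finitely many elements as an `O`-module, and `u` spans `H`
over `K`. -/
def IsSemiLattice (u : Submodule O H) : Prop :=
  ∃ U : Submodule K H, U.restrictScalars O ≤ u ∧
    (∃ s : Finset H, u = U.restrictScalars O ⊔ Submodule.span O (s : Set H)) ∧
    Submodule.span K (u : Set H) = ⊤

/-- Divisibility (by elements of `O`) is total on `K`. -/
lemma aux_div_total (a b : K) : (∃ o : O, a = o • b) ∨ (∃ o : O, b = o • a) := by
  rcases eq_or_ne a 0 with rfl | ha
  · exact Or.inl ⟨0, by simp⟩
  rcases eq_or_ne b 0 with rfl | hb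
  · exact Or.inr ⟨0, by simp⟩
  rcases ValuationRing.isInteger_or_isInteger O (a / b) with ⟨o, ho⟩ | ⟨o, ho⟩
  · refine Or.inl ⟨o, ?_⟩
    rw [Algebra.smul_def, ho, div_mul_cancel₀ _ hb]
  · refine Or.inr ⟨o, ?_⟩
    rw [Algebra.smul_def, ho, inv_div, div_mul_cancel₀ _ ha]

/-- Among finitely many elements of `K` there is one dividing all the others. -/
lemma aux_exists_max (k : ℕ) (c : Fin (k + 1) → K) :
    ∃ j, ∀ i, ∃ a : O, c i = a • c j := by
  induction k with
  | zero => exact ⟨0, fun i => ⟨1, by rw [show i = 0 from Fin.ext (by omega), one_smul]⟩⟩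
  | succ k ih =>
    obtain ⟨j, hj⟩ := ih (c ∘ Fin.castSucc)
    rcases aux_div_total (O := O) K (c (Fin.last (k + 1))) (c j.castSucc) with ⟨o, ho⟩ | ⟨o, ho⟩
    · refine ⟨j.castSucc, fun i => ?_⟩
      refine Fin.lastCases ?_ (fun i => ?_) i
      · exact ⟨o, ho⟩
      · exact hj i
    · refine ⟨Fin.last (k + 1), fun i => ?_⟩
      refine Fin.lastCases ?_ (fun i => ?_) i
      · exact ⟨1, (one_smul _ _).symm⟩
      · obtain ⟨a, ha⟩ := hj i
        exact ⟨a * o, by simp only [Function.comp_apply] at ha; rw [ha, ho, smul_smul]⟩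

/-- Every finitely generated `O`-submodule of a `K`-vector space has a generating
family which is `K`-linearly independent. -/
lemma aux_free [FiniteDimensional K H] (d : ℕ) :
    ∀ (k : ℕ) (s : Fin k → H),
      Module.finrank K (Submodule.span K (Set.range s)) ≤ d →
      ∃ (l : ℕ) (e : Fin l → H), LinearIndependent K e ∧
        Submodule.span O (Set.range e) = Submodule.span O (Set.range s) := by
  induction d with
  | zero =>
    intro k s h
    have h0 : Submodule.span K (Set.range s) = ⊥ := by
      have := Submodule.finrank_eq_zero (R := K) (S := Submodule.span K (Set.range s))
      exact this.mp (Nat.le_zero.mp h)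
    have hz : ∀ i, s i = 0 := by
      intro i
      have : s i ∈ Submodule.span K (Set.range s) := Submodule.subset_span (Set.mem_range_self i)
      rw [h0, Submodule.mem_bot] at this; exact this
    refine ⟨0, Fin.elim0, linearIndependent_empty_type, ?_⟩
    rw [Set.range_eq_empty Fin.elim0, Submodule.span_empty]
    exact (Submodule.span_eq_bot.mpr (by rintro x ⟨i, rfl⟩; exact hz i)).symm
  | succ d ih =>
    intro k s hrank
    by_cases hz : ∀ i, s i = 0
    · refine ⟨0, Fin.elim0, linearIndependent_empty_type, ?_⟩
      rw [Set.range_eq_empty Fin.elim0, Submodule.span_empty]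
      exact (Submodule.span_eq_bot.mpr (by rintro x ⟨i, rfl⟩; exact hz i)).symm
    push_neg at hz
    obtain ⟨i₀, hi₀⟩ := hz
    obtain ⟨k', rfl⟩ : ∃ k', k = k' + 1 := by
      cases k with
      | zero => exact i₀.elim0
      | succ k' => exact ⟨k', rfl⟩
    have hφ : ∃ φ : Module.Dual K H, φ (s i₀) ≠ 0 := by
      by_contra hc
      push_neg at hc
      exact hi₀ ((Module.forall_dual_apply_eq_zero_iff K (s i₀)).mp hc)
    obtain ⟨φ, hφ⟩ := hφ
    obtain ⟨j, hj⟩ := aux_exists_max (O := O) K k' (fun i => φ (s i))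
    choose a ha using hj
    have hcj : φ (s j) ≠ 0 := by
      intro h0
      exact hφ (by rw [ha i₀, h0, smul_zero])
    set t : Fin (k' + 1) → H := fun i => s i - a i • s j with ht
    have hsmul : ∀ (o : O) (y : H), o • y = (algebraMap O K o) • y := fun o y =>
      (algebraMap_smul K o y).symm
    have hφt : ∀ i, φ (t i) = 0 := by
      intro i
      show φ (s i - a i • s j) = 0
      rw [map_sub, hsmul (a i) (s j), map_smul, smul_eq_mul, ha i, Algebra.smul_def]
      ring
    have htmem : ∀ i, t i ∈ Submodule.span K (Set.range s) := by
      intro i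
      refine sub_mem (Submodule.subset_span (Set.mem_range_self i)) ?_
      rw [hsmul]
      exact Submodule.smul_mem _ _ (Submodule.subset_span (Set.mem_range_self j))
    have hts : Submodule.span K (Set.range t) ≤ Submodule.span K (Set.range s) := by
      rw [Submodule.span_le]; rintro x ⟨i, rfl⟩; exact htmem i
    have htker : ∀ x ∈ Submodule.span K (Set.range t), φ x = 0 := by
      intro x hx
      have : Submodule.span K (Set.range t) ≤ LinearMap.ker φ := by
        rw [Submodule.span_le]; rintro y ⟨i, rfl⟩; exact hφt i
      exact this hx
    have hxt : s j ∉ Submodule.span K (Set.range t) := fun hmem => hcj (htker _ hmem)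
    have hlt : Submodule.span K (Set.range t) < Submodule.span K (Set.range s) :=
      lt_of_le_of_ne hts (fun heq => hxt (heq ▸ Submodule.subset_span (Set.mem_range_self j)))
    have hd : Module.finrank K (Submodule.span K (Set.range t)) ≤ d := by
      have := Submodule.finrank_lt_finrank_of_lt hlt
      omega
    obtain ⟨l, e, he, hespan⟩ := ih (k' + 1) t hd
    have hespanK : Submodule.span K (Set.range e) = Submodule.span K (Set.range t) := by
      rw [← Submodule.span_span_of_tower (R := O) (S := K) (s := Set.range e),
        ← Submodule.span_span_of_tower (R := O) (S := K) (s := Set.range t), hespan]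
    refine ⟨l + 1, Fin.cons (s j) e, ?_, ?_⟩
    · rw [linearIndependent_fin_cons]
      exact ⟨he, fun hmem => hxt (hespanK ▸ hmem)⟩
    · rw [Fin.range_cons, Submodule.span_insert]
      apply le_antisymm
      · refine sup_le ?_ ?_
        · rw [Submodule.span_singleton_le_iff_mem]
          exact Submodule.subset_span (Set.mem_range_self j)
        · rw [hespan, Submodule.span_le]
          rintro x ⟨i, rfl⟩
          exact sub_mem (Submodule.subset_span (Set.mem_range_self i))
            (Submodule.smul_mem _ _ (Submodule.subset_span (Set.mem_range_self j)))
      · rw [Submodule.span_le]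
        rintro x ⟨i, rfl⟩
        have h1 : t i ∈ Submodule.span O (Set.range e) :=
          hespan ▸ Submodule.subset_span (Set.mem_range_self i)
        have h2 : t i + a i • s j = s i := sub_add_cancel (s i) (a i • s j)
        rw [← h2]
        exact Submodule.add_mem _ (Submodule.mem_sup_right h1)
          (Submodule.mem_sup_left (Submodule.smul_mem _ _ (Submodule.mem_span_singleton_self _)))

/-- Every semi-lattice `u` in a finite-dimensional `K`-vector space `H` is
`O`-module isomorphic to `O^l × K^r` with `l + r = dim H`; consequently there is a
`K`-basis `b` of `H` diagonalizing `u`, i.e. `u = ⊕ᵢ (u ∩ K bᵢ)`. -/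
theorem stmt8 [FiniteDimensional K H] (u : Submodule O H) (hu : IsSemiLattice K u) :
    ∃ l r : ℕ, l + r = Module.finrank K H ∧
      Nonempty (u ≃ₗ[O] ((Fin l → O) × (Fin r → K))) ∧
      ∃ b : Module.Basis (Fin (Module.finrank K H)) K H,
        u = ⨆ i, u ⊓ (Submodule.span K {b i}).restrictScalars O := by
  classical
  obtain ⟨U, hUu, ⟨s, hs⟩, hspanK⟩ := hu
  obtain ⟨W, hW⟩ := Submodule.exists_isCompl U
  set π := Submodule.linearProjOfIsCompl W U hW.symm with hπ
  set f : H →ₗ[K] H := W.subtype ∘ₗ π with hf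
  have hfW : ∀ y, f y ∈ W := fun y => (π y).2
  have hfsub : ∀ y, y - f y ∈ U := by
    intro y
    have : π (y - f y) = 0 := by
      rw [map_sub]
      have : π (f y) = π y := by
        simp only [hf, LinearMap.comp_apply, Submodule.subtype_apply]
        exact Submodule.linearProjOfIsCompl_apply_left hW.symm (π y)
      rw [this, sub_self]
    have := (Submodule.linearProjOfIsCompl_apply_eq_zero_iff hW.symm).mp this
    exact this
  -- enumerate s
  set k := s.card with hk
  set sv : Fin k → H := fun i => ((s.equivFin.symm i : H)) with hsv
  have hsvrange : Set.range sv = (s : Set H) := by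
    ext x
    constructor
    · rintro ⟨i, rfl⟩; exact (s.equivFin.symm i).2
    · intro hx
      exact ⟨s.equivFin ⟨x, hx⟩, by simp [hsv]⟩
  have hsspan : Submodule.span O (s : Set H) = Submodule.span O (Set.range sv) := by
    rw [hsvrange]
  set t : Fin k → H := fun i => f (sv i) with htdef
  set M := Submodule.span O (Set.range t) with hM
  have hsmul : ∀ (o : O) (y : H), o • y = (algebraMap O K o) • y := fun o y =>
    (algebraMap_smul K o y).symm
  have hsvu : ∀ i, sv i ∈ u := by
    intro i
    have : sv i ∈ Submodule.span O (s : Set H) :=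
      Submodule.subset_span (by rw [← hsvrange]; exact Set.mem_range_self i)
    rw [hs]; exact Submodule.mem_sup_right this
  have hMu : M ≤ u := by
    rw [hM, Submodule.span_le]
    rintro x ⟨i, rfl⟩
    have h1 : sv i - f (sv i) ∈ u := hUu (hfsub (sv i))
    have : t i = sv i - (sv i - f (sv i)) := by rw [htdef]; abel
    rw [this]
    exact sub_mem (hsvu i) h1
  have hu2 : u = U.restrictScalars O ⊔ M := by
    apply le_antisymm
    · rw [hs]
      refine sup_le le_sup_left ?_
      rw [hsspan, Submodule.span_le]
      rintro x ⟨i, rfl⟩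
      have h1 : sv i - f (sv i) ∈ (U.restrictScalars O : Submodule O H) := hfsub (sv i)
      have h2 : t i ∈ M := Submodule.subset_span (Set.mem_range_self i)
      have : sv i = (sv i - f (sv i)) + t i := by rw [htdef]; abel
      rw [this]
      exact Submodule.add_mem _ (Submodule.mem_sup_left h1) (Submodule.mem_sup_right h2)
    · exact sup_le hUu hMu
  -- free generating family for M
  obtain ⟨l, e, he, hespan⟩ :=
    aux_free (O := O) K (Module.finrank K (Submodule.span K (Set.range t))) k t le_rfl
  have heM : Submodule.span O (Set.range e) = M := by rw [hM, hespan]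
  have heW : ∀ i, e i ∈ W := by
    intro i
    have h1 : e i ∈ M := heM ▸ Submodule.subset_span (Set.mem_range_self i)
    have h2 : M ≤ W.restrictScalars O := by
      rw [hM, Submodule.span_le]
      rintro x ⟨i, rfl⟩
      exact hfW (sv i)
    exact h2 h1
  set V := Submodule.span K (Set.range e) with hV
  have hVW : V ≤ W := by
    rw [hV, Submodule.span_le]
    rintro x ⟨i, rfl⟩
    exact heW i
  have hUV : Disjoint U V := hW.disjoint.mono_right hVW
  have hMV : M ≤ V.restrictScalars O := by
    rw [hM, ← hespan, Submodule.span_le]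
    intro x hx
    exact Submodule.subset_span hx
  have hUVtop : U ⊔ V = ⊤ := by
    refine top_le_iff.mp ?_
    rw [← hspanK, Submodule.span_le]
    intro x hx
    rw [hu2] at hx
    obtain ⟨y, hy, m, hm, rfl⟩ := Submodule.mem_sup.mp hx
    exact Submodule.add_mem _ (Submodule.mem_sup_left hy) (Submodule.mem_sup_right (hMV hm))
  have hcompl : IsCompl U V := ⟨hUV, codisjoint_iff.mpr hUVtop⟩
  -- basis of U
  set r := Module.finrank K U with hr
  set bU : Module.Basis (Fin r) K U := Module.finBasis K U with hbU
  set bH : Fin r → H := fun j => (bU j : H) with hbH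
  have hbHU : ∀ j, bH j ∈ U := fun j => (bU j).2
  have hUspan : Submodule.span K (Set.range bH) = U := by
    have h1 : Set.range bH = U.subtype '' Set.range bU := by
      rw [← Set.range_comp]; rfl
    rw [h1, ← Submodule.map_span, bU.span_eq, Submodule.map_top, Submodule.range_subtype]
  -- independence of combined family
  have hbHind : LinearIndependent K bH := bU.linearIndependent.map' U.subtype U.ker_subtype
  set g : Fin l ⊕ Fin r → H := Sum.elim e bH with hg
  have hgind : LinearIndependent K g := by
    refine he.sum_type hbHind ?_
    rw [hUspan, ← hV]
    exact hUV.symm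
  have hgspan : Submodule.span K (Set.range g) = ⊤ := by
    rw [hg, Set.Sum.elim_range, Submodule.span_union, hUspan, ← hV, sup_comm, hUVtop]
  -- dimensions
  have hlV : Module.finrank K V = l := by
    have := Module.finrank_eq_card_basis (Module.Basis.span he)
    rw [← hV] at this
    simp [this]
  have hlr : l + r = Module.finrank K H := by
    have := Submodule.finrank_add_eq_of_isCompl hcompl
    rw [hlV] at this
    omega
  -- the basis of H
  set σ : (Fin l ⊕ Fin r) ≃ Fin (Module.finrank K H) :=
    finSumFinEquiv.trans (finCongr hlr) with hσ
  set b0 : Module.Basis (Fin l ⊕ Fin r) K H := Module.Basis.mk hgind (by rw [hgspan]) with hb0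
  set b : Module.Basis (Fin (Module.finrank K H)) K H := b0.reindex σ with hb
  have hbg : ∀ i : Fin l ⊕ Fin r, b (σ i) = g i := by
    intro i
    rw [hb, Module.Basis.reindex_apply, Equiv.symm_apply_apply, hb0, Module.Basis.mk_apply]
  -- membership representations
  have memU : ∀ y ∈ U, ∃ c : Fin r → K, ∑ j, c j • bH j = y := by
    intro y hy
    exact (Submodule.mem_span_range_iff_exists_fun K).mp (by rw [hUspan]; exact hy)
  have memM : ∀ m ∈ M, ∃ c : Fin l → O, ∑ i, c i • e i = m := by
    intro m hm
    exact (Submodule.mem_span_range_iff_exists_fun O).mp (by rw [heM]; exact hm)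
  refine ⟨l, r, hlr, ?_, ?_⟩
  · -- the linear equivalence
    set G : ((Fin l → O) × (Fin r → K)) →ₗ[O] H :=
      (Fintype.linearCombination O e).comp (LinearMap.fst O (Fin l → O) (Fin r → K)) +
        ((Fintype.linearCombination K bH).restrictScalars O).comp
          (LinearMap.snd O (Fin l → O) (Fin r → K)) with hG
    have hGapply : ∀ p : (Fin l → O) × (Fin r → K),
        G p = (∑ i, p.1 i • e i) + ∑ j, p.2 j • bH j := by
      intro p
      simp [hG, Fintype.linearCombination_apply]
    have hGmem : ∀ p, G p ∈ u := by
      intro p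
      rw [hGapply]
      refine Submodule.add_mem _ ?_ ?_
      · refine hMu (heM ▸ Submodule.sum_mem _ fun i _ => ?_)
        exact Submodule.smul_mem _ _ (Submodule.subset_span (Set.mem_range_self i))
      · refine hUu ?_
        exact Submodule.sum_mem _ fun j _ => Submodule.smul_mem _ _ (hbHU j)
    set G' : ((Fin l → O) × (Fin r → K)) →ₗ[O] u := G.codRestrict u hGmem with hG'
    have hinj : Function.Injective G' := by
      rw [← LinearMap.ker_eq_bot]
      rw [LinearMap.ker_eq_bot']
      intro p hp
      have h0 : G p = 0 := by
        have := congrArg (Submodule.subtype u) hp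
        simpa [hG'] using this
      rw [hGapply] at h0
      set h : Fin l ⊕ Fin r → K := Sum.elim (fun i => algebraMap O K (p.1 i)) p.2 with hh
      have hsum : ∑ i, h i • g i = 0 := by
        rw [Fintype.sum_sum_type]
        have h1 : ∀ i : Fin l, h (Sum.inl i) • g (Sum.inl i) = p.1 i • e i := by
          intro i
          simp only [hh, hg, Sum.elim_inl]
          rw [← hsmul]
        have h2 : ∀ j : Fin r, h (Sum.inr j) • g (Sum.inr j) = p.2 j • bH j := by
          intro j
          simp [hh, hg]
        rw [Finset.sum_congr rfl fun i _ => h1 i, Finset.sum_congr rfl fun j _ => h2 j]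
        exact h0
      have hz := Fintype.linearIndependent_iff.mp hgind h hsum
      have hp1 : p.1 = 0 := by
        funext i
        have := hz (Sum.inl i)
        simp only [hh, Sum.elim_inl] at this
        exact IsFractionRing.injective O K (this.trans (map_zero (algebraMap O K)).symm)
      have hp2 : p.2 = 0 := by
        funext j
        have := hz (Sum.inr j)
        simpa [hh] using this
      exact Prod.ext hp1 hp2
    have hsurj : Function.Surjective G' := by
      intro x
      have hx : (x : H) ∈ U.restrictScalars O ⊔ M := by rw [← hu2]; exact x.2
      obtain ⟨y, hy, m, hm, hxy⟩ := Submodule.mem_sup.mp hx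
      obtain ⟨c, hc⟩ := memU y hy
      obtain ⟨a, ha⟩ := memM m hm
      refine ⟨(a, c), ?_⟩
      apply Subtype.ext
      show G (a, c) = (x : H)
      rw [hGapply]
      simp only
      rw [ha, hc, ← hxy]
      abel
    exact ⟨(LinearEquiv.ofBijective G' ⟨hinj, hsurj⟩).symm⟩
  · -- the diagonalizing basis
    refine ⟨b, le_antisymm ?_ (iSup_le fun i => inf_le_left)⟩
    intro x hx
    rw [hu2] at hx
    obtain ⟨y, hy, m, hm, rfl⟩ := Submodule.mem_sup.mp hx
    obtain ⟨c, hc⟩ := memU y hy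
    obtain ⟨a, ha⟩ := memM m hm
    refine Submodule.add_mem _ ?_ ?_
    · rw [← hc]
      refine Submodule.sum_mem _ fun j _ => ?_
      refine Submodule.mem_iSup_of_mem (σ (Sum.inr j)) ?_
      refine Submodule.mem_inf.mpr ⟨?_, ?_⟩
      · exact hUu (Submodule.smul_mem U (c j) (hbHU j))
      · show c j • bH j ∈ Submodule.span K {b (σ (Sum.inr j))}
        rw [hbg (Sum.inr j)]
        exact Submodule.smul_mem _ _ (Submodule.mem_span_singleton_self _)
    · rw [← ha]
      refine Submodule.sum_mem _ fun i _ => ?_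
      refine Submodule.mem_iSup_of_mem (σ (Sum.inl i)) ?_
      refine Submodule.mem_inf.mpr ⟨?_, ?_⟩
      · exact hMu (Submodule.smul_mem M (a i)
          (heM ▸ Submodule.subset_span (Set.mem_range_self i)))
      · show a i • e i ∈ Submodule.span K {b (σ (Sum.inl i))}
        rw [hbg (Sum.inl i), hsmul]
        exact Submodule.smul_mem _ _ (Submodule.mem_span_singleton_self _)

end
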